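/- Let X be a normed space, let a = (a_n) be a sequence in X with finite range, and let b = (b_n) be a sequence in X whose set of values is somewhere dense in X (i.e., its closure has nonempty interior). Then the set of values of the sequence (a_n + b_n) is somewhere dense in X. -/

import Mathlib

lemma aux_finite_union_interior {X : Type*} [TopologicalSpace X] {ι : Type*}
    {s : Set ι} (hs : s.Finite) (F : ι → Set X) (hF : ∀ i, IsClosed (F i)) :
    (interior (⋃ i ∈ s, F i)).Nonempty → ∃ i ∈ s, (interior (F i)).Nonempty := by
  induction s, hs using Set.Finite.induction_on with
  | empty => simp
  | @insert i s hi hfin ih =>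
    intro h
    rw [Set.biUnion_insert] at h
    by_cases hrest : (interior (⋃ j ∈ s, F j)).Nonempty
    · obtain ⟨j, hj, hji⟩ := ih hrest
      exact ⟨j, Set.mem_insert_of_mem _ hj, hji⟩
    · -- rest has empty interior; show interior (F i) nonempty
      obtain ⟨x, hx⟩ := h
      have hU : IsOpen (interior (F i ∪ ⋃ j ∈ s, F j)) := isOpen_interior
      by_cases hdiff : (interior (F i ∪ ⋃ j ∈ s, F j) \ F i).Nonempty
      · exfalso
        apply hrest
        obtain ⟨y, hy⟩ := hdiff
        refine ⟨y, ?_⟩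
        have hopen : IsOpen (interior (F i ∪ ⋃ j ∈ s, F j) \ F i) :=
          hU.sdiff (hF i)
        have hsub : interior (F i ∪ ⋃ j ∈ s, F j) \ F i ⊆ ⋃ j ∈ s, F j := by
          intro z hz
          rcases interior_subset hz.1 with h1 | h2
          · exact absurd h1 hz.2
          · exact h2
        exact interior_maximal hsub hopen hy
      · refine ⟨i, Set.mem_insert _ _, ⟨x, ?_⟩⟩
        rw [Set.not_nonempty_iff_eq_empty] at hdiff
        have : interior (F i ∪ ⋃ j ∈ s, F j) ⊆ F i := by
          intro z hz
          by_contra hzF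
          exact Set.eq_empty_iff_forall_notMem.mp hdiff z ⟨hz, hzF⟩
        exact interior_maximal this isOpen_interior hx

theorem somewhere_dense_add_finite_range
    {X : Type*} [NormedAddCommGroup X] [NormedSpace ℝ X]
    (a b : ℕ → X) (ha : (Set.range a).Finite)
    (hb : (interior (closure (Set.range b))).Nonempty) :
    (interior (closure (Set.range (fun n => a n + b n)))).Nonempty := by
  set S := Set.range (fun n => a n + b n) with hS
  set F : X → Set X := fun v => closure ((fun x => x - v) '' S) with hF
  have hsub : Set.range b ⊆ ⋃ v ∈ Set.range a, F v := by
    rintro x ⟨n, rfl⟩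
    refine Set.mem_biUnion ⟨n, rfl⟩ ?_
    exact subset_closure ⟨a n + b n, ⟨n, rfl⟩, by simp⟩
  have hclosed : IsClosed (⋃ v ∈ Set.range a, F v) :=
    ha.isClosed_biUnion (fun v _ => isClosed_closure)
  have hcl : closure (Set.range b) ⊆ ⋃ v ∈ Set.range a, F v :=
    closure_minimal hsub hclosed
  have hne : (interior (⋃ v ∈ Set.range a, F v)).Nonempty :=
    hb.mono (interior_mono hcl)
  obtain ⟨v, _, hvne⟩ := aux_finite_union_interior ha F
    (fun v => isClosed_closure) hne
  -- translate back
  have : F v = (Homeomorph.subRight v) '' closure S := by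
    rw [hF]
    exact ((Homeomorph.subRight v).image_closure S).symm
  rw [this, ← Homeomorph.image_interior] at hvne
  exact hvne.of_image
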